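/- Let u, c : ℕ, let P : (Fin u → ℝ) →ₗ[ℝ] (Fin c → ℝ) be surjective, and let A be an endomorphism of Fin u → ℝ and B an endomorphism of Fin c → ℝ with P ∘ₗ A = B ∘ₗ P. If there exists a basis of Fin u → ℝ consisting of eigenvectors of A, then: (1) there exists a basis of Fin c → ℝ consisting of eigenvectors of B, and (2) every eigenvalue of B is an eigenvalue of A. -/

import Mathlib

/-- If a surjective map `P` intertwines the endomorphisms `A` and `B` and `A` is
diagonalizable (admits an eigenbasis), then `B` is diagonalizable and every eigenvalue
of `B` is an eigenvalue of `A`. -/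
theorem stmt_12 (u c : ℕ)
    (P : (Fin u → ℝ) →ₗ[ℝ] (Fin c → ℝ))
    (hP : Function.Surjective P)
    (A : Module.End ℝ (Fin u → ℝ))
    (B : Module.End ℝ (Fin c → ℝ))
    (hcomm : P ∘ₗ A = B ∘ₗ P)
    (hA : ∃ bA : Module.Basis (Fin u) ℝ (Fin u → ℝ),
      ∀ i, ∃ μ : ℝ, Module.End.HasEigenvector A μ (bA i)) :
    (∃ bB : Module.Basis (Fin c) ℝ (Fin c → ℝ),
      ∀ j, ∃ ν : ℝ, Module.End.HasEigenvector B ν (bB j)) ∧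
    (∀ ν : ℝ, Module.End.HasEigenvalue B ν → Module.End.HasEigenvalue A ν) := by
  obtain ⟨bA, hbA⟩ := hA
  choose μ hμ using hbA
  -- image vectors are in eigenspaces of B
  have key : ∀ i, P (bA i) ∈ Module.End.eigenspace B (μ i) := by
    intro i
    have h1 : A (bA i) = μ i • bA i := (hμ i).apply_eq_smul
    have h2 : B (P (bA i)) = P (A (bA i)) := by
      have := congrFun (congrArg DFunLike.coe hcomm) (bA i)
      simpa using this.symm
    rw [Module.End.mem_eigenspace_iff, h2, h1, map_smul]
  -- span of images is top
  have hspan : Submodule.span ℝ (Set.range fun i => P (bA i)) = ⊤ := by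
    have : Set.range (fun i => P (bA i)) = P '' Set.range bA := by
      rw [← Set.range_comp]; rfl
    rw [this, ← Submodule.map_span, bA.span_eq, Submodule.map_top,
      LinearMap.range_eq_top.mpr hP]
  constructor
  · -- diagonalizability of B
    obtain ⟨b, hbsub, hbspan, hbli⟩ :=
      exists_linearIndependent ℝ (Set.range fun i => P (bA i))
    rw [hspan] at hbspan
    let bB0 : Module.Basis b ℝ (Fin c → ℝ) := Module.Basis.mk hbli (by rw [Subtype.range_coe, hbspan])
    haveI : Fintype b := FiniteDimensional.fintypeBasisIndex bB0
    have hcard : Fintype.card b = c := by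
      have := Module.finrank_eq_card_basis bB0
      simpa using this.symm
    let e : Fin c ≃ b := (Fintype.equivFinOfCardEq hcard).symm
    refine ⟨bB0.reindex e.symm, fun j => ?_⟩
    have hmem : (bB0.reindex e.symm) j ∈ Set.range fun i => P (bA i) := by
      rw [Module.Basis.reindex_apply, Module.Basis.mk_apply]
      exact hbsub (e j).2
    obtain ⟨i, hi⟩ := hmem
    refine ⟨μ i, ?_, ?_⟩
    · rw [← hi]; exact key i
    · exact (bB0.reindex e.symm).ne_zero j
  · -- eigenvalues of B are eigenvalues of A
    intro ν hν
    by_contra hAν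
    -- then ν ∉ range μ
    have hne : ∀ i, μ i ≠ ν := by
      intro i h
      exact hAν (h ▸ Module.End.hasEigenvalue_of_hasEigenvector (hμ i))
    have htop : (⊤ : Submodule ℝ (Fin c → ℝ)) ≤ ⨆ (x : ℝ) (_ : x ≠ ν), Module.End.eigenspace B x := by
      rw [← hspan, Submodule.span_le]
      rintro _ ⟨i, rfl⟩
      exact Submodule.mem_iSup_of_mem (μ i) (Submodule.mem_iSup_of_mem (hne i) (key i))
    have hdisj := (iSupIndep_def.mp B.eigenspaces_iSupIndep) ν
    have : Module.End.eigenspace B ν = ⊥ := by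
      rw [eq_bot_iff]
      intro x hx
      exact hdisj.le_bot ⟨hx, htop (Submodule.mem_top)⟩
    exact hν this
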